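/- With the notation of the previous statement, for all a ≠ c in F one has n_{a,a} > n_{a,c}. In particular, counting pairs (f,π) with f(0)=a weighted by the value f_π(0), the diagonal count strictly exceeds every off-diagonal count. -/

import Mathlib

/-- `n_{a,c}`: the number of pairs `(f, π)` with `f` a polynomial of degree ≤ b,
`f(0) = a`, and `f_π(0) = c`, where `f_π` is the unique polynomial of degree ≤ b
with `f_π(x_{π k}) = f(x_k)` for all `k`. -/
noncomputable def pairCount {F : Type*} [Field F] (b : ℕ) (x : Fin (b + 1) → F) (a c : F) : ℕ :=
  Nat.card {p : Polynomial F × Equiv.Perm (Fin (b + 1)) //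
    p.1.degree ≤ (b : ℕ) ∧ p.1.eval 0 = a ∧
    ∃ g : Polynomial F, g.degree ≤ (b : ℕ) ∧
      (∀ k, g.eval (x (p.2 k)) = p.1.eval (x k)) ∧ g.eval 0 = c}

open Polynomial Finset

namespace PairCountAux

variable {F : Type*} [Field F]

lemma degree_lt_succ_iff {b : ℕ} {p : Polynomial F} :
    p.degree < ((b + 1 : ℕ) : WithBot ℕ) ↔ p.degree ≤ (b : ℕ) := by
  constructor
  · intro h
    rcases eq_or_ne p 0 with rfl | hp
    · simp
    · rw [degree_eq_natDegree hp] at h ⊢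
      exact_mod_cast Nat.lt_succ_iff.mp (by exact_mod_cast h)
  · intro h
    rcases eq_or_ne p 0 with rfl | hp
    · simp only [degree_zero]; exact WithBot.bot_lt_coe _
    · rw [degree_eq_natDegree hp] at h ⊢
      exact_mod_cast Nat.lt_succ_iff.mpr (by exact_mod_cast h)

/-- The Lagrange weights at `0`. -/
noncomputable def w (b : ℕ) (x : Fin (b + 1) → F) (i : Fin (b + 1)) : F :=
  (Lagrange.basis Finset.univ x i).eval 0

lemma card_univ_fin (b : ℕ) : (#(Finset.univ : Finset (Fin (b + 1))) : WithBot ℕ)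
    = ((b + 1 : ℕ) : WithBot ℕ) := by
  simp

lemma w_ne_zero {b : ℕ} {x : Fin (b + 1) → F} (hx : Function.Injective x)
    (hx0 : ∀ k, x k ≠ 0) (i : Fin (b + 1)) : w b x i ≠ 0 := by
  unfold w Lagrange.basis
  rw [eval_prod]
  refine Finset.prod_ne_zero_iff.mpr fun j hj => ?_
  have hij : x i ≠ x j := fun h => (Finset.mem_erase.mp hj).1 (hx h).symm
  simp only [Lagrange.basisDivisor, eval_mul, eval_C, eval_sub, eval_X, zero_sub]
  exact mul_ne_zero (inv_ne_zero (sub_ne_zero_of_ne hij)) (neg_ne_zero.mpr (hx0 j))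

lemma eval_zero_eq_sum {b : ℕ} {x : Fin (b + 1) → F} (hx : Function.Injective x)
    {f : Polynomial F} (hf : f.degree ≤ (b : ℕ)) :
    f.eval 0 = ∑ i, w b x i * f.eval (x i) := by
  have hinj : Set.InjOn x (Finset.univ : Finset (Fin (b + 1))) := hx.injOn
  have hdeg : f.degree < (#(Finset.univ : Finset (Fin (b + 1))) : WithBot ℕ) := by
    rw [card_univ_fin]; exact degree_lt_succ_iff.mpr hf
  conv_lhs => rw [Lagrange.eq_interpolate hinj hdeg]
  rw [Lagrange.interpolate_apply, eval_finset_sum]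
  refine Finset.sum_congr rfl fun i _ => ?_
  rw [eval_mul, eval_C, mul_comm]
  rfl

lemma sum_w {b : ℕ} {x : Fin (b + 1) → F} (hx : Function.Injective x) :
    ∑ i, w b x i = 1 := by
  have := eval_zero_eq_sum (f := (1 : Polynomial F)) hx (by simp)
  simpa using this.symm

lemma exists_g_iff {b : ℕ} {x : Fin (b + 1) → F} (hx : Function.Injective x)
    (f : Polynomial F) (π : Equiv.Perm (Fin (b + 1))) (c : F) :
    (∃ g : Polynomial F, g.degree ≤ (b : ℕ) ∧
      (∀ k, g.eval (x (π k)) = f.eval (x k)) ∧ g.eval 0 = c) ↔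
    ∑ i, w b x (π i) * f.eval (x i) = c := by
  have hinj : Set.InjOn x (Finset.univ : Finset (Fin (b + 1))) := hx.injOn
  constructor
  · rintro ⟨g, hg, hgv, hg0⟩
    have h1 : g.eval 0 = ∑ j, w b x j * g.eval (x j) := eval_zero_eq_sum hx hg
    have h2 : ∑ j, w b x j * g.eval (x j) = ∑ i, w b x (π i) * g.eval (x (π i)) :=
      (Equiv.sum_comp π (fun j => w b x j * g.eval (x j))).symm
    rw [← hg0, h1, h2]
    exact Finset.sum_congr rfl fun i _ => by rw [hgv i]
  · intro h
    refine ⟨Lagrange.interpolate Finset.univ x (fun j => f.eval (x (π.symm j))), ?_, ?_, ?_⟩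
    · have := Lagrange.degree_interpolate_lt (fun j => f.eval (x (π.symm j))) hinj
      rw [card_univ_fin] at this
      exact degree_lt_succ_iff.mp this
    · intro k
      rw [Lagrange.eval_interpolate_at_node _ hinj (Finset.mem_univ _)]
      simp
    · have h0 : (Lagrange.interpolate Finset.univ x (fun j => f.eval (x (π.symm j)))).eval 0
          = ∑ j, w b x j * f.eval (x (π.symm j))  := by
        rw [Lagrange.interpolate_apply, eval_finset_sum]
        refine Finset.sum_congr rfl fun j _ => ?_
        rw [eval_mul, eval_C, mul_comm]
        rfl
      rw [h0, ← h]
      rw [← Equiv.sum_comp π (fun j => w b x j * f.eval (x (π.symm j)))]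
      simp

/-- Solution set of the linear system attached to a permutation. -/
abbrev T (b : ℕ) (x : Fin (b + 1) → F) (π : Equiv.Perm (Fin (b + 1))) (a c : F) : Type _ :=
  {v : Fin (b + 1) → F // ∑ i, w b x i * v i = a ∧ ∑ i, w b x (π i) * v i = c}

lemma pairCount_eq_sum [Fintype F] {b : ℕ} {x : Fin (b + 1) → F}
    (hx : Function.Injective x) (a c : F) :
    pairCount b x a c = ∑ π : Equiv.Perm (Fin (b + 1)), Nat.card (T b x π a c) := by
  classical
  have hinj : Set.InjOn x (Finset.univ : Finset (Fin (b + 1))) := hx.injOn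
  have e : {p : Polynomial F × Equiv.Perm (Fin (b + 1)) //
      p.1.degree ≤ (b : ℕ) ∧ p.1.eval 0 = a ∧
      ∃ g : Polynomial F, g.degree ≤ (b : ℕ) ∧
        (∀ k, g.eval (x (p.2 k)) = p.1.eval (x k)) ∧ g.eval 0 = c} ≃
      (Σ π : Equiv.Perm (Fin (b + 1)), T b x π a c) := by
    refine
      { toFun := fun p => ⟨p.1.2, ⟨fun i => p.1.1.eval (x i), ?_, ?_⟩⟩
        invFun := fun q => ⟨(Lagrange.interpolate Finset.univ x q.2.1, q.1), ?_, ?_, ?_⟩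
        left_inv := ?_
        right_inv := ?_ }
    · rw [← eval_zero_eq_sum hx p.2.1]; exact p.2.2.1
    · exact (exists_g_iff hx p.1.1 p.1.2 c).mp p.2.2.2
    · have := Lagrange.degree_interpolate_lt q.2.1 hinj
      rw [card_univ_fin] at this
      exact degree_lt_succ_iff.mp this
    · have h0 : (Lagrange.interpolate Finset.univ x q.2.1).eval 0
          = ∑ j, w b x j * q.2.1 j := by
        rw [Lagrange.interpolate_apply, eval_finset_sum]
        refine Finset.sum_congr rfl fun j _ => ?_
        rw [eval_mul, eval_C, mul_comm]
        rfl
      rw [h0]; exact q.2.2.1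
    · refine (exists_g_iff hx _ q.1 c).mpr ?_
      have : ∀ i, (Lagrange.interpolate Finset.univ x q.2.1).eval (x i) = q.2.1 i :=
        fun i => Lagrange.eval_interpolate_at_node _ hinj (Finset.mem_univ _)
      rw [Finset.sum_congr rfl fun i _ => by rw [this i]]
      exact q.2.2.2
    · rintro ⟨⟨f, π⟩, hdeg, hrest⟩
      have hdeg' : f.degree < (#(Finset.univ : Finset (Fin (b + 1))) : WithBot ℕ) := by
        rw [card_univ_fin]; exact degree_lt_succ_iff.mpr hdeg
      ext : 1
      simp only
      exact Prod.ext (Lagrange.eq_interpolate hinj hdeg').symm rfl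
    · rintro ⟨π, v, hv⟩
      refine Sigma.ext rfl ?_
      simp only [heq_eq_eq]
      ext i
      exact Lagrange.eval_interpolate_at_node _ hinj (Finset.mem_univ _)
  rw [pairCount, Nat.card_congr e, Nat.card_eq_fintype_card, Fintype.card_sigma]
  exact Finset.sum_congr rfl fun π _ => (Nat.card_eq_fintype_card).symm

lemma card_T_fixed_eq_zero [Fintype F] {b : ℕ} {x : Fin (b + 1) → F}
    {π : Equiv.Perm (Fin (b + 1))} (hπ : ∀ i, w b x (π i) = w b x i)
    {a c : F} (hac : a ≠ c) : Nat.card (T b x π a c) = 0 := by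
  have : IsEmpty (T b x π a c) := by
    refine ⟨fun v => hac ?_⟩
    calc a = ∑ i, w b x i * v.1 i := v.2.1.symm
    _ = ∑ i, w b x (π i) * v.1 i := (Finset.sum_congr rfl fun i _ => by rw [hπ i]).symm
    _ = c := v.2.2
  simp

lemma card_T_eq_of_not_fixed [Fintype F] {b : ℕ} {x : Fin (b + 1) → F}
    (hx : Function.Injective x) {π : Equiv.Perm (Fin (b + 1))}
    (hπ : ¬ ∀ i, w b x (π i) = w b x i) (a c c' : F) :
    Nat.card (T b x π a c) = Nat.card (T b x π a c') := by
  classical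
  push_neg at hπ
  obtain ⟨j, hj⟩ := hπ
  -- translate by a vector v₀ with ⟨w, v₀⟩ = 0 and ⟨w∘π, v₀⟩ = c' - c.
  set α : F := (c' - c) / (w b x (π j) - w b x j) with hα
  set β : F := -(α * w b x j) with hβ
  set v₀ : Fin (b + 1) → F := fun i => (if i = j then α else 0) + β with hv₀
  have hsum1 : ∑ i, w b x i * v₀ i = 0 := by
    simp only [hv₀, mul_add, mul_ite, mul_zero, Finset.sum_add_distrib,
      Finset.sum_ite_eq' Finset.univ j, Finset.mem_univ, if_true,
      ← Finset.sum_mul, sum_w hx, one_mul, hβ]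
    ring
  have hsum2 : ∑ i, w b x (π i) * v₀ i = c' - c := by
    have hrw : ∑ i, w b x (π i) = 1 := by
      rw [Equiv.sum_comp π (w b x)]; exact sum_w hx
    simp only [hv₀, mul_add, mul_ite, mul_zero, Finset.sum_add_distrib,
      Finset.sum_ite_eq' Finset.univ j, Finset.mem_univ, if_true,
      ← Finset.sum_mul, hrw, one_mul, hβ, hα]
    field_simp [sub_ne_zero_of_ne hj]
    ring
  have e : T b x π a c ≃ T b x π a c' := by
    refine
      { toFun := fun v => ⟨v.1 + v₀, ?_, ?_⟩
        invFun := fun v => ⟨v.1 - v₀, ?_, ?_⟩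
        left_inv := fun v => by ext i; simp
        right_inv := fun v => by ext i; simp }
    · simp only [Pi.add_apply, mul_add, Finset.sum_add_distrib, v.2.1, hsum1, add_zero]
    · simp only [Pi.add_apply, mul_add, Finset.sum_add_distrib, v.2.2, hsum2]; ring
    · simp only [Pi.sub_apply, mul_sub, Finset.sum_sub_distrib, v.2.1, hsum1, sub_zero]
    · simp only [Pi.sub_apply, mul_sub, Finset.sum_sub_distrib, v.2.2, hsum2]; ring
  exact Nat.card_congr e

lemma card_T_id_pos [Fintype F] {b : ℕ} {x : Fin (b + 1) → F}
    (hx : Function.Injective x) (a : F) :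
    0 < Nat.card (T b x 1 a a) := by
  have h : ∑ i, w b x i * (fun _ => a) i = a := by
    simp only [← Finset.sum_mul, sum_w hx, one_mul]
  have : Nonempty (T b x 1 a a) := ⟨⟨fun _ => a, h, by simpa using h⟩⟩
  exact Nat.card_pos

end PairCountAux

/-- The diagonal count strictly exceeds every off-diagonal count:
`n_{a,a} > n_{a,c}` for `a ≠ c`. -/
theorem pairCount_diag_gt_offdiag {F : Type*} [Field F] [Fintype F]
    (b : ℕ) (hb : 1 ≤ b) (hq : b + 2 < Fintype.card F)
    (x : Fin (b + 1) → F) (hx : Function.Injective x) (hx0 : ∀ k, x k ≠ 0) :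
    ∀ a c : F, a ≠ c → pairCount b x a c < pairCount b x a a := by
  intro a c hac
  classical
  rw [PairCountAux.pairCount_eq_sum hx a c, PairCountAux.pairCount_eq_sum hx a a]
  refine Finset.sum_lt_sum (fun π _ => ?_) ⟨1, Finset.mem_univ _, ?_⟩
  · by_cases hπ : ∀ i, PairCountAux.w b x (π i) = PairCountAux.w b x i
    · rw [PairCountAux.card_T_fixed_eq_zero hπ hac]; exact Nat.zero_le _
    · rw [PairCountAux.card_T_eq_of_not_fixed hx hπ a c a]
  · rw [PairCountAux.card_T_fixed_eq_zero (π := 1) (fun i => rfl) hac]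
    exact PairCountAux.card_T_id_pos hx a
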